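/- Let σ = τ_λ with λ ∈ {1, x, y}, let ε ∈ {1,-1}, and let u = δ + αx + βy + γz with δ, α, β, γ ∈ O_K, σ(u) = ε·u, and ν_D(u) = 0 (u is a unit of O_D). Then there exists an invertible t ∈ D with u = σ(t)·(δ + αx)·t; that is, the one-dimensional ε-hermitian forms ⟨u⟩ and ⟨δ + αx⟩ over (D, σ) are isometric. -/

import Mathlib

noncomputable section

/-- A surjective discrete valuation `ν : K → ℤ` on a field `K`
(the value of `ν` at `0` is irrelevant: only nonzero elements are constrained). -/
structure DVal (K : Type) [Field K] : Type where
  ν : K → ℤ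
  ν_mul : ∀ x y : K, x ≠ 0 → y ≠ 0 → ν (x * y) = ν x + ν y
  ν_add : ∀ x y : K, x ≠ 0 → y ≠ 0 → x + y ≠ 0 → min (ν x) (ν y) ≤ ν (x + y)
  ν_one : ν 1 = 0
  ν_surj : ∀ n : ℤ, ∃ x : K, x ≠ 0 ∧ ν x = n

namespace DVal

variable {K : Type} [Field K]

/-- `x` belongs to the valuation ring `O_K`. -/
def Int (V : DVal K) (x : K) : Prop := x = 0 ∨ 0 ≤ V.ν x

/-- `x` is a unit of the valuation ring `O_K`. -/
def IntUnit (V : DVal K) (x : K) : Prop := x ≠ 0 ∧ V.ν x = 0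

/-- `x` belongs to the maximal ideal `m_K` of the valuation ring `O_K`. -/
def MaxIdeal (V : DVal K) (x : K) : Prop := x = 0 ∨ 1 ≤ V.ν x

/-- `K` is complete with respect to the valuation `ν`: every Cauchy sequence converges. -/
def IsComplete (V : DVal K) : Prop :=
  ∀ f : ℕ → K,
    (∀ M : ℤ, ∃ N : ℕ, ∀ m n : ℕ, N ≤ m → N ≤ n →
      f m - f n = 0 ∨ M ≤ V.ν (f m - f n)) →
    ∃ L : K, ∀ M : ℤ, ∃ N : ℕ, ∀ n : ℕ, N ≤ n →
      f n - L = 0 ∨ M ≤ V.ν (f n - L)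

/-- The residue field `k = O_K/m_K` has characteristic different from `2`,
i.e. `2` is a unit of the valuation ring `O_K`. -/
def ResCharNeTwo (V : DVal K) : Prop := (2 : K) ≠ 0 ∧ V.ν 2 = 0

end DVal

/-- The reduced norm of a quaternion `u = δ + αx + βy + γz ∈ ℍ[K,a,b]`:
`Nrd u = u·τ(u) = δ² - aα² - bβ² + abγ²`. -/
def qnrd {K : Type} [Field K] (a b : K) (u : QuaternionAlgebra K a 0 b) : K :=
  u.re ^ 2 - a * u.imI ^ 2 - b * u.imJ ^ 2 + a * b * u.imK ^ 2

/-- The canonical involution `τ(δ + αx + βy + γz) = δ - αx - βy - γz` of `ℍ[K,a,b]`. -/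
def qtau {K : Type} [Field K] {a b : K} (u : QuaternionAlgebra K a 0 b) :
    QuaternionAlgebra K a 0 b :=
  ⟨u.re, -u.imI, -u.imJ, -u.imK⟩

/-- The norm form `⟨1,-a,-b,ab⟩` of `ℍ[K,a,b]` is anisotropic over `K`
(equivalently, `ℍ[K,a,b]` is a division ring). -/
def QAniso {K : Type} [Field K] (a b : K) : Prop :=
  ∀ d e f g : K, d ^ 2 - a * e ^ 2 - b * f ^ 2 + a * b * g ^ 2 = 0 →
    d = 0 ∧ e = 0 ∧ f = 0 ∧ g = 0

/-- The valuation `ν_D(u) = (1/2)·ν_K(Nrd u)` of the quaternion division algebra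
`D = ℍ[K,a,b]` (at nonzero `u`). -/
def qnu {K : Type} [Field K] (V : DVal K) (a b : K) (u : QuaternionAlgebra K a 0 b) : ℚ :=
  (V.ν (qnrd a b u) : ℚ) / 2

section VLemmas

variable {K : Type} [Field K] (V : DVal K)

lemma nu_neg_one : V.ν (-1) = 0 := by
  have h := V.ν_mul (-1) (-1) (by norm_num) (by norm_num)
  simp only [neg_mul, one_mul, neg_neg, V.ν_one] at h
  omega

lemma nu_neg (x : K) (hx : x ≠ 0) : V.ν (-x) = V.ν x := by
  have h := V.ν_mul (-1) x (by norm_num) hx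
  rw [neg_one_mul] at h; rw [h, nu_neg_one]; ring

lemma nu_inv (x : K) (hx : x ≠ 0) : V.ν x⁻¹ = -V.ν x := by
  have h := V.ν_mul x x⁻¹ hx (inv_ne_zero hx)
  rw [mul_inv_cancel₀ hx, V.ν_one] at h; omega

lemma nu_div (x y : K) (hx : x ≠ 0) (hy : y ≠ 0) : V.ν (x / y) = V.ν x - V.ν y := by
  rw [div_eq_mul_inv, V.ν_mul x y⁻¹ hx (inv_ne_zero hy), nu_inv V y hy]; ring

/-- dominance: if `b` has strictly bigger valuation, `a + b ≠ 0` and `ν (a+b) = ν a`. -/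
lemma nu_add_eq' (a b : K) (ha : a ≠ 0) (hb : b ≠ 0) (hlt : V.ν a < V.ν b) :
    a + b ≠ 0 ∧ V.ν (a + b) = V.ν a := by
  have hne : a + b ≠ 0 := by
    intro h
    have hb' : b = -a := by linear_combination h
    rw [hb', nu_neg V a ha] at hlt; omega
  have h1 := V.ν_add a b ha hb hne
  have h2 := V.ν_add (a + b) (-b) hne (neg_ne_zero.2 hb) (by simpa using ha)
  rw [add_neg_cancel_right] at h2
  rw [nu_neg V b hb] at h2
  exact ⟨hne, by omega⟩

lemma nu_add_eq (a b : K) (ha : a ≠ 0) (hb : b = 0 ∨ (b ≠ 0 ∧ V.ν a < V.ν b)) :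
    a + b ≠ 0 ∧ V.ν (a + b) = V.ν a := by
  rcases hb with rfl | ⟨hb, hlt⟩
  · exact ⟨by simpa using ha, by simp⟩
  · exact nu_add_eq' V a b ha hb hlt

/-- combining two small elements -/
lemma nu_add_ge (k : ℤ) (A B : K) (hA : A = 0 ∨ k ≤ V.ν A) (hB : B = 0 ∨ k ≤ V.ν B) :
    A + B = 0 ∨ k ≤ V.ν (A + B) := by
  rcases eq_or_ne A 0 with rfl | hA0
  · simpa using hB
  rcases eq_or_ne B 0 with rfl | hB0
  · simpa using hA
  by_cases h : A + B = 0
  · exact Or.inl h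
  right
  have := V.ν_add A B hA0 hB0 h
  have hA' := hA.resolve_left hA0
  have hB' := hB.resolve_left hB0
  omega

lemma int_mul (x y : K) (hx : V.Int x) (hy : V.Int y) : V.Int (x * y) := by
  rcases hx with rfl | hx
  · left; ring
  rcases hy with rfl | hy
  · left; ring
  rcases eq_or_ne x 0 with rfl | hx0
  · left; ring
  rcases eq_or_ne y 0 with rfl | hy0
  · left; ring
  right; rw [V.ν_mul x y hx0 hy0]; omega

lemma int_neg (x : K) (hx : V.Int x) : V.Int (-x) := by
  rcases hx with rfl | hx
  · left; ring
  rcases eq_or_ne x 0 with rfl | hx0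
  · left; ring
  right; rw [nu_neg V x hx0]; exact hx

lemma int_add (x y : K) (hx : V.Int x) (hy : V.Int y) : V.Int (x + y) := by
  rcases hx with rfl | hx
  · rcases hy with rfl | hy
    · left; ring
    · rcases eq_or_ne y 0 with rfl | hy0
      · left; ring
      · right; simpa using hy
  rcases hy with rfl | hy
  · rcases eq_or_ne x 0 with rfl | hx0
    · left; ring
    · right; simpa using hx
  rcases eq_or_ne x 0 with rfl | hx0
  · rcases eq_or_ne y 0 with rfl | hy0
    · left; ring
    · right; simpa using hy
  rcases eq_or_ne y 0 with rfl | hy0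
  · right; simpa using hx
  rcases eq_or_ne (x + y) 0 with h | h
  · left; exact h
  right
  have := V.ν_add x y hx0 hy0 h
  omega

lemma newton_step {K : Type} [Field K] : True := trivial

end VLemmas

/-- Newton iteration for square roots. -/
def newtonSeq {K : Type} [Field K] (e : K) : ℕ → K
  | 0 => 1
  | n + 1 => (newtonSeq e n + e / newtonSeq e n) / 2

section Hensel

variable {K : Type} [Field K] (V : DVal K)

/-- Hensel's lemma for square roots of units congruent to 1 mod the maximal ideal. -/
lemma hensel_sqrt (hcomp : V.IsComplete) (hchar : V.ResCharNeTwo)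
    (e : K) (he : e - 1 = 0 ∨ 1 ≤ V.ν (e - 1)) :
    ∃ s : K, s ≠ 0 ∧ s ^ 2 = e ∧ (s - 1 = 0 ∨ 1 ≤ V.ν (s - 1)) := by
  obtain ⟨h2, hv2⟩ := hchar
  rcases eq_or_ne e 1 with rfl | he1
  · exact ⟨1, one_ne_zero, by ring, Or.inl (by ring)⟩
  have hd0 : e - 1 ≠ 0 := sub_ne_zero.2 he1
  have hm0 : 1 ≤ V.ν (e - 1) := he.resolve_left hd0
  set m0 : ℤ := V.ν (e - 1) with hm0def
  set f : ℕ → K := newtonSeq e with hf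
  have hf0 : f 0 = 1 := rfl
  have hfs : ∀ n, f (n + 1) = (f n + e / f n) / 2 := fun n => rfl
  -- main invariant
  have key : ∀ n : ℕ, f n ≠ 0 ∧ V.ν (f n) = 0 ∧
      (f n ^ 2 - e = 0 ∨ (n : ℤ) + m0 ≤ V.ν (f n ^ 2 - e)) := by
    intro n
    induction n with
    | zero =>
      refine ⟨by rw [hf0]; exact one_ne_zero, by rw [hf0]; exact V.ν_one, Or.inr ?_⟩
      have h1 : f 0 ^ 2 - e = -(e - 1) := by rw [hf0]; ring
      rw [h1, nu_neg V _ hd0]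
      simp [hm0def]
    | succ n ih =>
      obtain ⟨hx0, hvx, hsq⟩ := ih
      set x := f n with hxdef
      have h2x : (2 : K) * x ≠ 0 := mul_ne_zero h2 hx0
      have hv2x : V.ν (2 * x) = 0 := by
        rw [V.ν_mul 2 x h2 hx0, hv2, hvx]; ring
      have hx20 : x ^ 2 ≠ 0 := pow_ne_zero 2 hx0
      have h2x2 : (2 : K) * x ^ 2 ≠ 0 := mul_ne_zero h2 hx20
      have hvx2 : V.ν (x ^ 2) = 0 := by
        rw [sq x, V.ν_mul x x hx0 hx0, hvx]; ring
      have hv2x2 : V.ν (2 * x ^ 2) = 0 := by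
        rw [V.ν_mul 2 (x ^ 2) h2 hx20, hv2, hvx2]; ring
      have hrw : x ^ 2 + e = 2 * x ^ 2 + -(x ^ 2 - e) := by ring
      have hcond : -(x ^ 2 - e) = 0 ∨
          (-(x ^ 2 - e) ≠ 0 ∧ V.ν (2 * x ^ 2) < V.ν (-(x ^ 2 - e))) := by
        rcases eq_or_ne (x ^ 2 - e) 0 with h0 | h0
        · left; rw [h0]; ring
        · right
          refine ⟨neg_ne_zero.2 h0, ?_⟩
          rw [nu_neg V _ h0, hv2x2]
          have h := hsq.resolve_left h0
          have : (0 : ℤ) ≤ (n : ℤ) := Int.ofNat_nonneg n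
          omega
      have hnum : x ^ 2 + e ≠ 0 ∧ V.ν (x ^ 2 + e) = 0 := by
        have h := nu_add_eq V _ _ h2x2 hcond
        rw [hrw]
        exact ⟨h.1, by rw [h.2, hv2x2]⟩
      have hfe : f (n + 1) = (x ^ 2 + e) / (2 * x) := by
        rw [hfs n, ← hxdef]
        field_simp
      have hfne : f (n + 1) ≠ 0 := by
        rw [hfe]; exact div_ne_zero hnum.1 h2x
      have hvf : V.ν (f (n + 1)) = 0 := by
        rw [hfe, nu_div V _ _ hnum.1 h2x, hnum.2, hv2x]; ring
      refine ⟨hfne, hvf, ?_⟩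
      have hsqf : f (n + 1) ^ 2 - e = (x ^ 2 - e) ^ 2 / (2 * x) ^ 2 := by
        rw [hfe]
        field_simp
        ring
      rcases eq_or_ne (x ^ 2 - e) 0 with h0 | h0
      · left; rw [hsqf, h0]; simp
      · right
        have hnum2 : (x ^ 2 - e) ^ 2 ≠ 0 := pow_ne_zero 2 h0
        have hden2 : ((2 : K) * x) ^ 2 ≠ 0 := pow_ne_zero 2 h2x
        have hv1 : V.ν ((x ^ 2 - e) ^ 2) = 2 * V.ν (x ^ 2 - e) := by
          rw [sq (x ^ 2 - e), V.ν_mul _ _ h0 h0]; ring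
        have hv2' : V.ν ((2 * x : K) ^ 2) = 0 := by
          rw [sq ((2 : K) * x), V.ν_mul _ _ h2x h2x, hv2x]; ring
        rw [hsqf, nu_div V _ _ hnum2 hden2, hv1, hv2']
        have h := hsq.resolve_left h0
        have : (0 : ℤ) ≤ (n : ℤ) := Int.ofNat_nonneg n
        push_cast
        omega
  -- consecutive differences
  have diff : ∀ n : ℕ, f (n + 1) - f n = 0 ∨ (n : ℤ) + m0 ≤ V.ν (f (n + 1) - f n) := by
    intro n
    obtain ⟨hx0, hvx, hsq⟩ := key n
    have h2x : (2 : K) * f n ≠ 0 := mul_ne_zero h2 hx0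
    have hv2x : V.ν (2 * f n) = 0 := by rw [V.ν_mul 2 (f n) h2 hx0, hv2, hvx]; ring
    have hdq : f (n + 1) - f n = -(f n ^ 2 - e) / (2 * f n) := by
      rw [hfs n]
      field_simp
      ring
    rcases eq_or_ne (f n ^ 2 - e) 0 with h0 | h0
    · left; rw [hdq, h0]; simp
    · right
      rw [hdq, nu_div V _ _ (neg_ne_zero.2 h0) h2x, nu_neg V _ h0, hv2x]
      have h := hsq.resolve_left h0
      omega
  -- chained differences
  have chain : ∀ n m : ℕ, n ≤ m → (f m - f n = 0 ∨ (n : ℤ) + m0 ≤ V.ν (f m - f n)) := by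
    intro n m hnm
    induction m, hnm using Nat.le_induction with
    | base => left; ring
    | succ m hnm ih =>
      have h1 : f (m + 1) - f n = (f (m + 1) - f m) + (f m - f n) := by ring
      rw [h1]
      apply nu_add_ge
      · rcases diff m with h | h
        · left; exact h
        · right
          have : (n : ℤ) ≤ (m : ℤ) := by exact_mod_cast hnm
          omega
      · exact ih
  -- Cauchy
  have cauchy : ∀ M : ℤ, ∃ N : ℕ, ∀ p q : ℕ, N ≤ p → N ≤ q →
      f p - f q = 0 ∨ M ≤ V.ν (f p - f q) := by
    intro M
    refine ⟨M.toNat, fun p q hp hq => ?_⟩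
    have hMp : M ≤ (p : ℤ) := le_trans (Int.self_le_toNat M) (by exact_mod_cast hp)
    have hMq : M ≤ (q : ℤ) := le_trans (Int.self_le_toNat M) (by exact_mod_cast hq)
    rcases le_total q p with h | h
    · rcases chain q p h with h0 | h0
      · left; exact h0
      · right; omega
    · rcases chain p q h with h0 | h0
      · left; rw [← neg_sub (f q) (f p), h0]; ring
      · rcases eq_or_ne (f p - f q) 0 with hz | hz
        · left; exact hz
        · right
          have : f p - f q = -(f q - f p) := by ring
          rw [this, nu_neg V _ (fun hc => hz (by rw [this, hc]; ring))]
          omega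
  obtain ⟨L, hL⟩ := hcomp f cauchy
  -- L is close to 1
  have hL1 : L - 1 = 0 ∨ 1 ≤ V.ν (L - 1) := by
    obtain ⟨N, hN⟩ := hL 1
    have h1 : L - 1 = -(f N - L) + (f N - f 0) := by rw [hf0]; ring
    rw [h1]
    apply nu_add_ge
    · rcases eq_or_ne (f N - L) 0 with h0 | h0
      · left; rw [h0]; ring
      · right
        rw [nu_neg V _ h0]
        exact (hN N le_rfl).resolve_left h0
    · rcases chain 0 N (Nat.zero_le N) with h | h
      · left; exact h
      · right; omega
  have hLne : L ≠ 0 := by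
    rintro rfl
    rcases hL1 with h | h
    · norm_num at h
    · rw [show (0 : K) - 1 = -1 by ring, nu_neg_one V] at h
      omega
  -- L^2 = e
  have hL2 : L ^ 2 = e := by
    by_contra hne
    have hne' : L ^ 2 - e ≠ 0 := sub_ne_zero.2 hne
    set M0 : ℤ := V.ν (L ^ 2 - e) with hM0
    set M : ℤ := max (M0 + 1) 1 with hM
    obtain ⟨N, hN⟩ := hL M
    set n : ℕ := max N M.toNat with hn
    have hnN : N ≤ n := le_max_left _ _
    have hnM : M ≤ (n : ℤ) := le_trans (Int.self_le_toNat M) (by exact_mod_cast le_max_right N M.toNat)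
    obtain ⟨hfn0, hvfn, hsq⟩ := key n
    have hclose := hN n hnN
    -- L + f n
    have hsum : L + f n ≠ 0 ∧ V.ν (L + f n) = 0 := by
      have hrw : L + f n = 2 * f n + -(f n - L) := by ring
      have hv2fn : V.ν (2 * f n) = 0 := by rw [V.ν_mul 2 (f n) h2 hfn0, hv2, hvfn]; ring
      have hcond : -(f n - L) = 0 ∨
          (-(f n - L) ≠ 0 ∧ V.ν (2 * f n) < V.ν (-(f n - L))) := by
        rcases hclose with h | h
        · left; rw [h]; ring
        · rcases eq_or_ne (f n - L) 0 with h0 | h0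
          · left; rw [h0]; ring
          · right
            refine ⟨neg_ne_zero.2 h0, ?_⟩
            rw [nu_neg V _ h0, hv2fn]
            omega
      have h := nu_add_eq V _ _ (mul_ne_zero h2 hfn0) hcond
      rw [hrw]
      exact ⟨h.1, by rw [h.2, hv2fn]⟩
    have hdec : L ^ 2 - e = (L - f n) * (L + f n) + (f n ^ 2 - e) := by ring
    have hterm1 : (L - f n) * (L + f n) = 0 ∨ M0 + 1 ≤ V.ν ((L - f n) * (L + f n)) := by
      rcases eq_or_ne (L - f n) 0 with h0 | h0
      · left; rw [h0]; ring
      · right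
        have h0' : f n - L ≠ 0 := fun hc => h0 (by rw [show L - f n = -(f n - L) by ring, hc]; ring)
        rw [V.ν_mul _ _ h0 hsum.1, hsum.2, show L - f n = -(f n - L) by ring, nu_neg V _ h0']
        have h := hclose.resolve_left h0'
        omega
    have hterm2 : f n ^ 2 - e = 0 ∨ M0 + 1 ≤ V.ν (f n ^ 2 - e) := by
      rcases hsq with h | h
      · left; exact h
      · right
        have : (0:ℤ) ≤ (n:ℤ) := Int.ofNat_nonneg n
        omega
    have := nu_add_ge V (M0 + 1) _ _ hterm1 hterm2
    rw [← hdec] at this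
    rcases this with h | h
    · exact hne' h
    · omega
  exact ⟨L, hLne, hL2, hL1⟩

end Hensel

section QLemmas

variable {K : Type} [Field K] {a b : K}

lemma qtau_one : qtau (1 : QuaternionAlgebra K a 0 b) = 1 := by
  ext <;> simp [qtau]

lemma mk_ne_zero_of_re (r i j k : K) (hr : r ≠ 0) :
    (⟨r, i, j, k⟩ : QuaternionAlgebra K a 0 b) ≠ 0 :=
  fun h => hr (by simpa using congrArg QuaternionAlgebra.re h)

lemma q_isUnit (haniso : QAniso a b) (t : QuaternionAlgebra K a 0 b) (ht : t ≠ 0) :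
    IsUnit t := by
  have hnrd : qnrd a b t ≠ 0 := by
    intro h
    obtain ⟨h1, h2, h3, h4⟩ := haniso t.re t.imI t.imJ t.imK h
    exact ht (by ext <;> simp [h1, h2, h3, h4])
  have hmul : t * qtau t = (qnrd a b t) • 1 := by ext <;> simp [qtau, qnrd] <;> ring
  have hmul' : qtau t * t = (qnrd a b t) • 1 := by ext <;> simp [qtau, qnrd] <;> ring
  refine isUnit_iff_exists.2 ⟨(qnrd a b t)⁻¹ • qtau t, ?_, ?_⟩
  · rw [mul_smul_comm, hmul, smul_smul, inv_mul_cancel₀ hnrd, one_smul]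
  · rw [smul_mul_assoc, hmul', smul_smul, inv_mul_cancel₀ hnrd, one_smul]

end QLemmas

section Core

variable {K : Type} [Field K]

/-- Core isometry construction. -/
lemma q_core (a ϖ δ α β γ p s d : K)
    (σ : QuaternionAlgebra K a 0 ϖ → QuaternionAlgebra K a 0 ϖ)
    (hd : 2 * p * (δ ^ 2 - a * α ^ 2) * d = 1)
    (hps : 2 * p ^ 2 = 1 + s)
    (hs' : s ^ 2 * (δ ^ 2 - a * α ^ 2) = (δ ^ 2 - a * α ^ 2) - ϖ * (β ^ 2 - a * γ ^ 2))
    (hcomm : σ (⟨p, 0, (δ * β - a * α * γ) * d, (δ * γ - α * β) * d⟩ : QuaternionAlgebra K a 0 ϖ)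
        * (⟨δ, α, 0, 0⟩ : QuaternionAlgebra K a 0 ϖ)
      = (⟨δ, α, 0, 0⟩ : QuaternionAlgebra K a 0 ϖ)
        * ⟨p, 0, (δ * β - a * α * γ) * d, (δ * γ - α * β) * d⟩) :
    (⟨δ, α, β, γ⟩ : QuaternionAlgebra K a 0 ϖ)
      = σ (⟨p, 0, (δ * β - a * α * γ) * d, (δ * γ - α * β) * d⟩ : QuaternionAlgebra K a 0 ϖ)
        * (⟨δ, α, 0, 0⟩ : QuaternionAlgebra K a 0 ϖ)
        * ⟨p, 0, (δ * β - a * α * γ) * d, (δ * γ - α * β) * d⟩ := by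
  have hkey : 4 * p ^ 2 * p ^ 2 * (δ ^ 2 - a * α ^ 2)
      = 4 * p ^ 2 * (δ ^ 2 - a * α ^ 2) - ϖ * (β ^ 2 - a * γ ^ 2) := by
    linear_combination ((δ ^ 2 - a * α ^ 2) * (2 * p ^ 2 - 1 + s)) * hps + hs'
  have h1 : (⟨p, 0, (δ * β - a * α * γ) * d, (δ * γ - α * β) * d⟩ : QuaternionAlgebra K a 0 ϖ)
        * ⟨p, 0, (δ * β - a * α * γ) * d, (δ * γ - α * β) * d⟩
      = ⟨1, 0, (δ * β - a * α * γ) * (2 * p * d), (δ * γ - α * β) * (2 * p * d)⟩ := by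
    apply QuaternionAlgebra.ext
    · show p * p + a * 0 * 0 + ϖ * _ * _ + 0 * ϖ * _ * _ - a * ϖ * _ * _ = 1
      linear_combination ((δ ^ 2 - a * α ^ 2) * d ^ 2) * hkey
        + (-(p ^ 2 - 1) * (1 + 2 * p * (δ ^ 2 - a * α ^ 2) * d)) * hd
    · show p * 0 + 0 * p + 0 * 0 * 0 - ϖ * _ * _ + ϖ * _ * _ = 0
      ring
    · show p * _ + a * 0 * _ + _ * p + 0 * _ * 0 - a * _ * 0 = _
      ring
    · show p * _ + 0 * _ + 0 * 0 * _ - _ * 0 + _ * p = _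
      ring
  have h3 : (⟨δ, α, 0, 0⟩ : QuaternionAlgebra K a 0 ϖ)
        * ⟨1, 0, (δ * β - a * α * γ) * (2 * p * d), (δ * γ - α * β) * (2 * p * d)⟩
      = ⟨δ, α, β, γ⟩ := by
    apply QuaternionAlgebra.ext
    · show δ * 1 + a * α * 0 + ϖ * 0 * _ + 0 * ϖ * 0 * _ - a * ϖ * 0 * _ = δ
      ring
    · show δ * 0 + α * 1 + 0 * α * 0 - ϖ * 0 * _ + ϖ * 0 * _ = α
      ring
    · show δ * _ + a * α * _ + 0 * 1 + 0 * 0 * 0 - a * 0 * 0 = β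
      linear_combination β * hd
    · show δ * _ + α * _ + 0 * α * _ - 0 * 0 + 0 * 1 = γ
      linear_combination γ * hd
  calc (⟨δ, α, β, γ⟩ : QuaternionAlgebra K a 0 ϖ)
      = (⟨δ, α, 0, 0⟩ : QuaternionAlgebra K a 0 ϖ)
          * ⟨1, 0, (δ * β - a * α * γ) * (2 * p * d), (δ * γ - α * β) * (2 * p * d)⟩ := h3.symm
    _ = (⟨δ, α, 0, 0⟩ : QuaternionAlgebra K a 0 ϖ)
          * ((⟨p, 0, (δ * β - a * α * γ) * d, (δ * γ - α * β) * d⟩ : QuaternionAlgebra K a 0 ϖ)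
            * ⟨p, 0, (δ * β - a * α * γ) * d, (δ * γ - α * β) * d⟩) := by rw [h1]
    _ = ((⟨δ, α, 0, 0⟩ : QuaternionAlgebra K a 0 ϖ)
          * ⟨p, 0, (δ * β - a * α * γ) * d, (δ * γ - α * β) * d⟩)
          * ⟨p, 0, (δ * β - a * α * γ) * d, (δ * γ - α * β) * d⟩ := (mul_assoc _ _ _).symm
    _ = _ := by rw [← hcomm]


section SqrtPair

variable {K : Type} [Field K] (V : DVal K)

lemma sqrt_pair (hcomp : V.IsComplete) (hchar : V.ResCharNeTwo) (c : K)
    (hc : c = 0 ∨ 1 ≤ V.ν c) :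
    ∃ p s : K, p ≠ 0 ∧ 2 * p ^ 2 = 1 + s ∧ s ^ 2 = 1 - c := by
  obtain ⟨h2, hv2⟩ := hchar
  have he : (1 - c) - 1 = 0 ∨ 1 ≤ V.ν ((1 - c) - 1) := by
    rcases hc with rfl | hc
    · left; ring
    · rcases eq_or_ne c 0 with rfl | hc0
      · left; ring
      · right
        rw [show (1 - c) - 1 = -c by ring, nu_neg V c hc0]
        exact hc
  obtain ⟨s, hs0, hs2, hs1⟩ := hensel_sqrt V hcomp ⟨h2, hv2⟩ (1 - c) he
  have hrw : ((1 + s) / 2) - 1 = (s - 1) / 2 := by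
    field_simp
    ring
  have he2 : ((1 + s) / 2) - 1 = 0 ∨ 1 ≤ V.ν (((1 + s) / 2) - 1) := by
    rcases eq_or_ne (s - 1) 0 with h0 | h0
    · left; rw [hrw, h0]; simp
    · right
      rw [hrw, nu_div V _ _ h0 h2, hv2]
      have h := hs1.resolve_left h0
      omega
  obtain ⟨p, hp0, hp2, _⟩ := hensel_sqrt V hcomp ⟨h2, hv2⟩ ((1 + s) / 2) he2
  refine ⟨p, s, hp0, ?_, hs2⟩
  rw [hp2]
  field_simp

end SqrtPair

/-- an unramified diagonal entry `u = δ + αx + βy + γz` (a unit of `O_D`)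
of an ε-hermitian form over `(D, τ_λ)`, `λ ∈ {1,x,y}`, is isometric to `δ + αx`. -/
theorem stmt_3 (K : Type) [Field K] (V : DVal K)
    -- K is complete with residue field of characteristic ≠ 2
    (hcomp : V.IsComplete) (hchar : V.ResCharNeTwo)
    -- D = ℍ[K,a,ϖ] with a ∈ O_K^×, ϖ a uniformizer, D a division ring
    (a ϖ : K) (ha0 : a ≠ 0) (hva : V.ν a = 0) (hϖ0 : ϖ ≠ 0) (hvϖ : V.ν ϖ = 1)
    (haniso : QAniso a ϖ)
    -- σ = τ_λ with λ ∈ {1, x, y} (μ = λ⁻¹)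
    (lam mu : QuaternionAlgebra K a 0 ϖ)
    (hlam : lam = 1 ∨ lam = (⟨0, 1, 0, 0⟩ : QuaternionAlgebra K a 0 ϖ) ∨ lam = (⟨0, 0, 1, 0⟩ : QuaternionAlgebra K a 0 ϖ))
    (hmu : lam * mu = 1) (hmu' : mu * lam = 1)
    (σ : QuaternionAlgebra K a 0 ϖ → QuaternionAlgebra K a 0 ϖ)
    (hσ : ∀ u, σ u = lam * qtau u * mu)
    -- ε ∈ {1, -1}
    (ε : K) (hε : ε = 1 ∨ ε = -1)
    -- u = δ + αx + βy + γz with coordinates in O_K, σ(u) = ε·u, ν_D(u) = 0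
    (δ α β γ : K) (hδ : V.Int δ) (hα : V.Int α) (hβ : V.Int β) (hγ : V.Int γ)
    (hu0 : (⟨δ, α, β, γ⟩ : QuaternionAlgebra K a 0 ϖ) ≠ 0)
    (hsym : σ ⟨δ, α, β, γ⟩ = ε • (⟨δ, α, β, γ⟩ : QuaternionAlgebra K a 0 ϖ))
    (hval : qnu V a ϖ (⟨δ, α, β, γ⟩ : QuaternionAlgebra K a 0 ϖ) = 0) :
    ∃ t : QuaternionAlgebra K a 0 ϖ, IsUnit t ∧
      (⟨δ, α, β, γ⟩ : QuaternionAlgebra K a 0 ϖ) =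
        σ t * (⟨δ, α, 0, 0⟩ : QuaternionAlgebra K a 0 ϖ) * t := by
  obtain ⟨h2, hv2⟩ := hchar
  have hσ1 : σ 1 = 1 := by rw [hσ 1, qtau_one, mul_one, hmu]
  have heq : lam * qtau (⟨δ, α, β, γ⟩ : QuaternionAlgebra K a 0 ϖ)
      = (ε • (⟨δ, α, β, γ⟩ : QuaternionAlgebra K a 0 ϖ)) * lam := by
    calc lam * qtau (⟨δ, α, β, γ⟩ : QuaternionAlgebra K a 0 ϖ)
        = lam * qtau (⟨δ, α, β, γ⟩ : QuaternionAlgebra K a 0 ϖ) * (mu * lam) := by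
          rw [hmu', mul_one]
      _ = (lam * qtau (⟨δ, α, β, γ⟩ : QuaternionAlgebra K a 0 ϖ) * mu) * lam := by
          rw [mul_assoc, mul_assoc, mul_assoc]
      _ = (ε • (⟨δ, α, β, γ⟩ : QuaternionAlgebra K a 0 ϖ)) * lam := by
          rw [← hσ, hsym]
  have hnrd0 : δ ^ 2 - a * α ^ 2 - ϖ * β ^ 2 + a * ϖ * γ ^ 2 ≠ 0 := by
    intro h
    obtain ⟨h1, h2', h3, h4⟩ := haniso δ α β γ h
    exact hu0 (by ext <;> simp [h1, h2', h3, h4])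
  have hvnrd : V.ν (δ ^ 2 - a * α ^ 2 - ϖ * β ^ 2 + a * ϖ * γ ^ 2) = 0 := by
    have hq : qnrd a ϖ (⟨δ, α, β, γ⟩ : QuaternionAlgebra K a 0 ϖ)
        = δ ^ 2 - a * α ^ 2 - ϖ * β ^ 2 + a * ϖ * γ ^ 2 := rfl
    rw [qnu, hq] at hval
    field_simp at hval
    exact_mod_cast hval
  have hint : V.Int (β ^ 2 - a * γ ^ 2) := by
    have h1 : V.Int (β ^ 2) := by rw [sq]; exact int_mul V β β hβ hβ
    have h2' : V.Int (γ ^ 2) := by rw [sq]; exact int_mul V γ γ hγ hγ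
    have h3 : V.Int (a * γ ^ 2) := int_mul V a _ (Or.inr (by rw [hva])) h2'
    rw [sub_eq_add_neg]
    exact int_add V _ _ h1 (int_neg V _ h3)
  have hn : (δ ^ 2 - a * α ^ 2) ≠ 0 ∧ V.ν (δ ^ 2 - a * α ^ 2) = 0 := by
    have hdecomp : δ ^ 2 - a * α ^ 2
        = (δ ^ 2 - a * α ^ 2 - ϖ * β ^ 2 + a * ϖ * γ ^ 2) + (ϖ * (β ^ 2 - a * γ ^ 2)) := by
      ring
    have hcond : ϖ * (β ^ 2 - a * γ ^ 2) = 0 ∨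
        (ϖ * (β ^ 2 - a * γ ^ 2) ≠ 0 ∧
          V.ν (δ ^ 2 - a * α ^ 2 - ϖ * β ^ 2 + a * ϖ * γ ^ 2)
            < V.ν (ϖ * (β ^ 2 - a * γ ^ 2))) := by
      rcases eq_or_ne (β ^ 2 - a * γ ^ 2) 0 with h | h
      · left; rw [h]; ring
      · right
        refine ⟨mul_ne_zero hϖ0 h, ?_⟩
        rw [hvnrd, V.ν_mul ϖ _ hϖ0 h, hvϖ]
        have := hint.resolve_left h
        omega
    have h := nu_add_eq V _ _ hnrd0 hcond
    rw [hdecomp]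
    exact ⟨h.1, by rw [h.2, hvnrd]⟩
  obtain ⟨hn1, hn2⟩ := hn
  have hcc : ϖ * (β ^ 2 - a * γ ^ 2) / (δ ^ 2 - a * α ^ 2) = 0 ∨
      1 ≤ V.ν (ϖ * (β ^ 2 - a * γ ^ 2) / (δ ^ 2 - a * α ^ 2)) := by
    rcases eq_or_ne (β ^ 2 - a * γ ^ 2) 0 with h | h
    · left; rw [h]; simp
    · right
      rw [nu_div V _ _ (mul_ne_zero hϖ0 h) hn1, V.ν_mul ϖ _ hϖ0 h, hvϖ, hn2]
      have := hint.resolve_left h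
      omega
  obtain ⟨p, s, hp0, hps, hs⟩ := sqrt_pair V hcomp ⟨h2, hv2⟩ _ hcc
  have hs' : s ^ 2 * (δ ^ 2 - a * α ^ 2)
      = (δ ^ 2 - a * α ^ 2) - ϖ * (β ^ 2 - a * γ ^ 2) := by
    rw [hs]; field_simp
  have hcancel : ∀ x y : K, x ≠ 0 → x * y = 0 → y = 0 :=
    fun x y hx h => (mul_eq_zero.1 h).resolve_left hx
  rcases hε with rfl | rfl
  · rcases hlam with rfl | rfl | rfl
    · -- λ = 1, ε = 1 : u = δ, trivial
      rw [show (1 : QuaternionAlgebra K a 0 ϖ) = ⟨1,0,0,0⟩ from rfl] at heq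
      rw [show qtau (⟨δ, α, β, γ⟩ : QuaternionAlgebra K a 0 ϖ) = ⟨δ, -α, -β, -γ⟩ from rfl,
        show ((1:K) • (⟨δ, α, β, γ⟩ : QuaternionAlgebra K a 0 ϖ)) = ⟨1*δ, 1*α, 1*β, 1*γ⟩ from rfl,
        QuaternionAlgebra.mk_mul_mk, QuaternionAlgebra.mk_mul_mk,
        QuaternionAlgebra.mk.injEq] at heq
      obtain ⟨e1, e2, e3, e4⟩ := heq
      have hα0 : α = 0 := hcancel 2 α h2 (by linear_combination -e2)
      have hβ0 : β = 0 := hcancel 2 β h2 (by linear_combination -e3)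
      have hγ0 : γ = 0 := hcancel 2 γ h2 (by linear_combination -e4)
      subst hα0; subst hβ0; subst hγ0
      exact ⟨1, isUnit_one, by rw [hσ1, one_mul, mul_one]⟩
    · -- λ = x, ε = 1 : α = 0
      rw [show qtau (⟨δ, α, β, γ⟩ : QuaternionAlgebra K a 0 ϖ) = ⟨δ, -α, -β, -γ⟩ from rfl,
        show ((1:K) • (⟨δ, α, β, γ⟩ : QuaternionAlgebra K a 0 ϖ)) = ⟨1*δ, 1*α, 1*β, 1*γ⟩ from rfl,
        QuaternionAlgebra.mk_mul_mk, QuaternionAlgebra.mk_mul_mk,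
        QuaternionAlgebra.mk.injEq] at heq
      obtain ⟨e1, e2, e3, e4⟩ := heq
      have hα0 : α = 0 := hcancel 2 α h2 (hcancel a (2 * α) ha0 (by linear_combination -e1))
      subst hα0
      obtain ⟨d, hd⟩ : ∃ d : K, 2 * p * (δ ^ 2 - a * 0 ^ 2) * d = 1 :=
        ⟨(2 * p * (δ ^ 2 - a * 0 ^ 2))⁻¹,
          mul_inv_cancel₀ (mul_ne_zero (mul_ne_zero h2 hp0) hn1)⟩
      have hmu_eq : mu = (⟨0, a⁻¹, 0, 0⟩ : QuaternionAlgebra K a 0 ϖ) := by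
        have hli : (⟨0, a⁻¹, 0, 0⟩ : QuaternionAlgebra K a 0 ϖ) * ⟨0, 1, 0, 0⟩ = 1 := by
          ext <;> simp <;> field_simp
        calc mu = ((⟨0, a⁻¹, 0, 0⟩ : QuaternionAlgebra K a 0 ϖ) * ⟨0, 1, 0, 0⟩) * mu := by
              rw [hli, one_mul]
          _ = (⟨0, a⁻¹, 0, 0⟩ : QuaternionAlgebra K a 0 ϖ) * (⟨0, 1, 0, 0⟩ * mu) := by
              rw [mul_assoc]
          _ = (⟨0, a⁻¹, 0, 0⟩ : QuaternionAlgebra K a 0 ϖ) := by rw [hmu, mul_one]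
      have hσt : σ (⟨p, 0, (δ * β - a * 0 * γ) * d, (δ * γ - 0 * β) * d⟩ : QuaternionAlgebra K a 0 ϖ)
          = ⟨p, 0, (δ * β - a * 0 * γ) * d, (δ * γ - 0 * β) * d⟩ := by
        rw [hσ, hmu_eq,
          show qtau (⟨p, 0, (δ * β - a * 0 * γ) * d, (δ * γ - 0 * β) * d⟩ : QuaternionAlgebra K a 0 ϖ)
            = ⟨p, -0, -((δ * β - a * 0 * γ) * d), -((δ * γ - 0 * β) * d)⟩ from rfl]
        ext <;> simp only [QuaternionAlgebra.re_mul, QuaternionAlgebra.imI_mul,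
          QuaternionAlgebra.imJ_mul, QuaternionAlgebra.imK_mul] <;> field_simp <;> ring
      have hcomm : σ (⟨p, 0, (δ * β - a * 0 * γ) * d, (δ * γ - 0 * β) * d⟩ : QuaternionAlgebra K a 0 ϖ)
            * (⟨δ, 0, 0, 0⟩ : QuaternionAlgebra K a 0 ϖ)
          = (⟨δ, 0, 0, 0⟩ : QuaternionAlgebra K a 0 ϖ)
            * ⟨p, 0, (δ * β - a * 0 * γ) * d, (δ * γ - 0 * β) * d⟩ := by
        rw [hσt]
        ext <;> simp only [QuaternionAlgebra.re_mul, QuaternionAlgebra.imI_mul,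
          QuaternionAlgebra.imJ_mul, QuaternionAlgebra.imK_mul] <;> ring
      exact ⟨⟨p, 0, (δ * β - a * 0 * γ) * d, (δ * γ - 0 * β) * d⟩,
        q_isUnit haniso _ (mk_ne_zero_of_re _ _ _ _ hp0),
        q_core a ϖ δ 0 β γ p s d σ hd hps hs' hcomm⟩
    · -- λ = y, ε = 1 : β = 0
      rw [show qtau (⟨δ, α, β, γ⟩ : QuaternionAlgebra K a 0 ϖ) = ⟨δ, -α, -β, -γ⟩ from rfl,
        show ((1:K) • (⟨δ, α, β, γ⟩ : QuaternionAlgebra K a 0 ϖ)) = ⟨1*δ, 1*α, 1*β, 1*γ⟩ from rfl,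
        QuaternionAlgebra.mk_mul_mk, QuaternionAlgebra.mk_mul_mk,
        QuaternionAlgebra.mk.injEq] at heq
      obtain ⟨e1, e2, e3, e4⟩ := heq
      have hβ0 : β = 0 := hcancel 2 β h2 (hcancel ϖ (2 * β) hϖ0 (by linear_combination -e1))
      subst hβ0
      obtain ⟨d, hd⟩ : ∃ d : K, 2 * p * (δ ^ 2 - a * α ^ 2) * d = 1 :=
        ⟨(2 * p * (δ ^ 2 - a * α ^ 2))⁻¹,
          mul_inv_cancel₀ (mul_ne_zero (mul_ne_zero h2 hp0) hn1)⟩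
      have hmu_eq : mu = (⟨0, 0, ϖ⁻¹, 0⟩ : QuaternionAlgebra K a 0 ϖ) := by
        have hli : (⟨0, 0, ϖ⁻¹, 0⟩ : QuaternionAlgebra K a 0 ϖ) * ⟨0, 0, 1, 0⟩ = 1 := by
          ext <;> simp <;> field_simp
        calc mu = ((⟨0, 0, ϖ⁻¹, 0⟩ : QuaternionAlgebra K a 0 ϖ) * ⟨0, 0, 1, 0⟩) * mu := by
              rw [hli, one_mul]
          _ = (⟨0, 0, ϖ⁻¹, 0⟩ : QuaternionAlgebra K a 0 ϖ) * (⟨0, 0, 1, 0⟩ * mu) := by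
              rw [mul_assoc]
          _ = (⟨0, 0, ϖ⁻¹, 0⟩ : QuaternionAlgebra K a 0 ϖ) := by rw [hmu, mul_one]
      have hσt : σ (⟨p, 0, (δ * 0 - a * α * γ) * d, (δ * γ - α * 0) * d⟩ : QuaternionAlgebra K a 0 ϖ)
          = ⟨p, 0, -((δ * 0 - a * α * γ) * d), (δ * γ - α * 0) * d⟩ := by
        rw [hσ, hmu_eq,
          show qtau (⟨p, 0, (δ * 0 - a * α * γ) * d, (δ * γ - α * 0) * d⟩ : QuaternionAlgebra K a 0 ϖ)
            = ⟨p, -0, -((δ * 0 - a * α * γ) * d), -((δ * γ - α * 0) * d)⟩ from rfl]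
        ext <;> simp only [QuaternionAlgebra.re_mul, QuaternionAlgebra.imI_mul,
          QuaternionAlgebra.imJ_mul, QuaternionAlgebra.imK_mul] <;> field_simp <;> ring
      have hcomm : σ (⟨p, 0, (δ * 0 - a * α * γ) * d, (δ * γ - α * 0) * d⟩ : QuaternionAlgebra K a 0 ϖ)
            * (⟨δ, α, 0, 0⟩ : QuaternionAlgebra K a 0 ϖ)
          = (⟨δ, α, 0, 0⟩ : QuaternionAlgebra K a 0 ϖ)
            * ⟨p, 0, (δ * 0 - a * α * γ) * d, (δ * γ - α * 0) * d⟩ := by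
        rw [hσt]
        ext <;> simp only [QuaternionAlgebra.re_mul, QuaternionAlgebra.imI_mul,
          QuaternionAlgebra.imJ_mul, QuaternionAlgebra.imK_mul] <;> ring
      exact ⟨⟨p, 0, (δ * 0 - a * α * γ) * d, (δ * γ - α * 0) * d⟩,
        q_isUnit haniso _ (mk_ne_zero_of_re _ _ _ _ hp0),
        q_core a ϖ δ α 0 γ p s d σ hd hps hs' hcomm⟩
  · rcases hlam with rfl | rfl | rfl
    · -- λ = 1, ε = -1 : δ = 0
      rw [show (1 : QuaternionAlgebra K a 0 ϖ) = ⟨1,0,0,0⟩ from rfl] at heq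
      rw [show qtau (⟨δ, α, β, γ⟩ : QuaternionAlgebra K a 0 ϖ) = ⟨δ, -α, -β, -γ⟩ from rfl,
        show ((-1:K) • (⟨δ, α, β, γ⟩ : QuaternionAlgebra K a 0 ϖ)) = ⟨-1*δ, -1*α, -1*β, -1*γ⟩ from rfl,
        QuaternionAlgebra.mk_mul_mk, QuaternionAlgebra.mk_mul_mk,
        QuaternionAlgebra.mk.injEq] at heq
      obtain ⟨e1, e2, e3, e4⟩ := heq
      have hδ0 : δ = 0 := hcancel 2 δ h2 (by linear_combination e1)
      subst hδ0
      obtain ⟨d, hd⟩ : ∃ d : K, 2 * p * ((0:K) ^ 2 - a * α ^ 2) * d = 1 :=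
        ⟨(2 * p * ((0:K) ^ 2 - a * α ^ 2))⁻¹,
          mul_inv_cancel₀ (mul_ne_zero (mul_ne_zero h2 hp0) hn1)⟩
      have hmu_eq : mu = 1 := by rw [one_mul] at hmu; exact hmu
      have hσt : σ (⟨p, 0, (0 * β - a * α * γ) * d, (0 * γ - α * β) * d⟩ : QuaternionAlgebra K a 0 ϖ)
          = ⟨p, 0, -((0 * β - a * α * γ) * d), -((0 * γ - α * β) * d)⟩ := by
        rw [hσ, hmu_eq, one_mul, mul_one]
        ext <;> simp [qtau]
      have hcomm : σ (⟨p, 0, (0 * β - a * α * γ) * d, (0 * γ - α * β) * d⟩ : QuaternionAlgebra K a 0 ϖ)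
            * (⟨0, α, 0, 0⟩ : QuaternionAlgebra K a 0 ϖ)
          = (⟨0, α, 0, 0⟩ : QuaternionAlgebra K a 0 ϖ)
            * ⟨p, 0, (0 * β - a * α * γ) * d, (0 * γ - α * β) * d⟩ := by
        rw [hσt]
        ext <;> simp only [QuaternionAlgebra.re_mul, QuaternionAlgebra.imI_mul,
          QuaternionAlgebra.imJ_mul, QuaternionAlgebra.imK_mul] <;> ring
      exact ⟨⟨p, 0, (0 * β - a * α * γ) * d, (0 * γ - α * β) * d⟩,
        q_isUnit haniso _ (mk_ne_zero_of_re _ _ _ _ hp0),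
        q_core a ϖ 0 α β γ p s d σ hd hps hs' hcomm⟩
    · -- λ = x, ε = -1 : u = αx, trivial
      rw [show qtau (⟨δ, α, β, γ⟩ : QuaternionAlgebra K a 0 ϖ) = ⟨δ, -α, -β, -γ⟩ from rfl,
        show ((-1:K) • (⟨δ, α, β, γ⟩ : QuaternionAlgebra K a 0 ϖ)) = ⟨-1*δ, -1*α, -1*β, -1*γ⟩ from rfl,
        QuaternionAlgebra.mk_mul_mk, QuaternionAlgebra.mk_mul_mk,
        QuaternionAlgebra.mk.injEq] at heq
      obtain ⟨e1, e2, e3, e4⟩ := heq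
      have hδ0 : δ = 0 := hcancel 2 δ h2 (by linear_combination e2)
      have hγ0 : γ = 0 := hcancel 2 γ h2 (hcancel a (2 * γ) ha0 (by linear_combination -e3))
      have hβ0 : β = 0 := hcancel 2 β h2 (by linear_combination -e4)
      subst hδ0; subst hβ0; subst hγ0
      exact ⟨1, isUnit_one, by rw [hσ1, one_mul, mul_one]⟩
    · -- λ = y, ε = -1 : impossible
      rw [show qtau (⟨δ, α, β, γ⟩ : QuaternionAlgebra K a 0 ϖ) = ⟨δ, -α, -β, -γ⟩ from rfl,
        show ((-1:K) • (⟨δ, α, β, γ⟩ : QuaternionAlgebra K a 0 ϖ)) = ⟨-1*δ, -1*α, -1*β, -1*γ⟩ from rfl,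
        QuaternionAlgebra.mk_mul_mk, QuaternionAlgebra.mk_mul_mk,
        QuaternionAlgebra.mk.injEq] at heq
      obtain ⟨e1, e2, e3, e4⟩ := heq
      have hδ0 : δ = 0 := hcancel 2 δ h2 (by linear_combination e3)
      have hα0 : α = 0 := hcancel 2 α h2 (by linear_combination e4)
      exact absurd (by rw [hδ0, hα0]; ring) hn1
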